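/- Let X be a complex space, K ⊂ X compact, ρ a plurisubharmonic function on X, and suppose x ∈ X has the property that for every ε > 0 and every open set U ⊃ K there exists an analytic disc f : closed unit disc → X, holomorphic on the open disc, with f(0) = x, image contained in a fixed relatively compact set V, and f(e^{it}) ∈ U for all t outside a set E_f ⊂ [0,2π] of Lebesgue measure < ε. Then ρ(x) ≤ sup_K ρ. -/

import Mathlib

open MeasureTheory Metric Complex Set

/-- Let `X` be a complex space (with `𝒜` its family of analytic discs,
i.e. continuous maps of the closed unit disc into `X`, holomorphic in the interior),
`K ⊆ X` compact, and `ρ` a plurisubharmonic function on `X` (upper semicontinuous and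
satisfying the sub-mean-value inequality over every analytic disc).  If `x ∈ X` has the
property that for every `ε > 0` and every open `U ⊇ K` there is an analytic disc `f`
with `f 0 = x`, image in a fixed relatively compact set `V`, and `f (e^{it}) ∈ U` for
all `t` outside a set `E ⊆ [0,2π]` of measure `< ε`, then `ρ x ≤ sup_K ρ`. -/
theorem stmt1 {X : Type*} [MetricSpace X]
    (𝒜 : Set (ℂ → X)) (hdisc : ∀ f ∈ 𝒜, ContinuousOn f (closedBall (0:ℂ) 1))
    (K V : Set X) (hK : IsCompact K) (hKne : K.Nonempty)
    (hV : IsCompact (closure V))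
    (ρ : X → ℝ) (husc : UpperSemicontinuous ρ) (hbdd : BddAbove (ρ '' V))
    (hsub : ∀ f ∈ 𝒜,
      IntervalIntegrable (fun t : ℝ => ρ (f (Complex.exp (t * Complex.I)))) volume 0 (2 * Real.pi) ∧
      ρ (f 0) ≤ (2 * Real.pi)⁻¹ *
        ∫ t in (0:ℝ)..(2 * Real.pi), ρ (f (Complex.exp (t * Complex.I))))
    (x : X)
    (hx : ∀ ε > (0:ℝ), ∀ U : Set X, IsOpen U → K ⊆ U →
      ∃ f ∈ 𝒜, f 0 = x ∧ (∀ ζ ∈ closedBall (0:ℂ) 1, f ζ ∈ V) ∧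
        ∃ E ⊆ Icc (0:ℝ) (2 * Real.pi), MeasurableSet E ∧ volume E < ENNReal.ofReal ε ∧
          ∀ t ∈ Icc (0:ℝ) (2 * Real.pi) \ E, f (Complex.exp (t * Complex.I)) ∈ U) :
    ρ x ≤ sSup (ρ '' K) := by
  have twopi_pos : (0:ℝ) < 2 * Real.pi := by positivity
  -- `ρ` is bounded above on `K` (USC + compactness)
  have hKbdd : BddAbove (ρ '' K) := by
    have hopen : ∀ n : ℕ, IsOpen {y : X | ρ y < n} := fun n =>
      upperSemicontinuous_iff_isOpen_preimage.1 husc n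
    have hcover : K ⊆ ⋃ n : ℕ, {y : X | ρ y < n} := by
      intro y _
      rcases exists_nat_gt (ρ y) with ⟨n, hn⟩
      exact mem_iUnion.2 ⟨n, hn⟩
    obtain ⟨s, hs⟩ := hK.elim_finite_subcover _ hopen hcover
    refine ⟨(s.sup id : ℕ), ?_⟩
    rintro r ⟨y, hy, rfl⟩
    rcases mem_iUnion₂.1 (hs hy) with ⟨n, hns, hn⟩
    calc ρ y ≤ (n : ℝ) := le_of_lt hn
      _ ≤ (s.sup id : ℕ) := by exact_mod_cast Finset.le_sup (f := id) hns
  set M : ℝ := sSup (ρ '' K) with hM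
  have hKle : ∀ y ∈ K, ρ y ≤ M := fun y hy => le_csSup hKbdd ⟨y, hy, rfl⟩
  -- upper bound on V
  obtain ⟨B, hB⟩ := hbdd
  -- it suffices to show `ρ x ≤ M + δ` for all `δ > 0`
  refine le_of_forall_pos_le_add ?_
  intro δ hδ
  set C : ℝ := max B (M + δ) with hC
  set c : ℝ := C - (M + δ / 2) with hc
  have hcpos : 0 < c :=
    sub_pos.mpr (lt_of_lt_of_le (by linarith) (le_max_right B (M + δ)))
  set ε : ℝ := Real.pi * δ / c with hε
  have hεpos : 0 < ε := by positivity
  -- the open neighborhood of K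
  set U : Set X := {y : X | ρ y < M + δ / 2} with hU
  have hUopen : IsOpen U := upperSemicontinuous_iff_isOpen_preimage.1 husc _
  have hKU : K ⊆ U := fun y hy => lt_of_le_of_lt (hKle y hy) (by linarith)
  obtain ⟨f, hf𝒜, hf0, hfV, E, hEsub, hEmeas, hEvol, hfU⟩ := hx ε hεpos U hUopen hKU
  obtain ⟨hint, hmean⟩ := hsub f hf𝒜
  -- boundary values lie in V
  have hcirc : ∀ t : ℝ, f (Complex.exp (t * Complex.I)) ∈ V := by
    intro t
    apply hfV
    simp [Complex.norm_exp]
  have hρC : ∀ t : ℝ, ρ (f (Complex.exp (t * Complex.I))) ≤ C :=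
    fun t => le_trans (hB ⟨_, hcirc t, rfl⟩) (le_max_left _ _)
  -- the majorant
  set h : ℝ → ℝ := fun t => (M + δ / 2) + c * E.indicator (fun _ => (1:ℝ)) t with hh
  have hEfin : volume E < ⊤ := lt_of_lt_of_le hEvol le_top
  have hind_int : IntervalIntegrable (E.indicator (fun _ => (1:ℝ))) volume 0 (2 * Real.pi) := by
    rw [intervalIntegrable_iff_integrableOn_Ioc_of_le (le_of_lt twopi_pos)]
    exact ((integrable_indicator_iff hEmeas).2
      (integrableOn_const hEfin.ne (by simp))).integrableOn
  have hhint : IntervalIntegrable h volume 0 (2 * Real.pi) :=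
    (intervalIntegrable_const).add (hind_int.const_mul c)
  -- pointwise bound
  have hgh : ∀ t ∈ Icc (0:ℝ) (2 * Real.pi),
      ρ (f (Complex.exp (t * Complex.I))) ≤ h t := by
    intro t ht
    by_cases htE : t ∈ E
    · have : h t = C := by simp [hh, indicator_of_mem htE, hc]
      rw [this]; exact hρC t
    · have h1 : h t = M + δ / 2 := by simp [hh, indicator_of_notMem htE]
      rw [h1]
      exact le_of_lt (hfU t ⟨ht, htE⟩)
  have hintle : (∫ t in (0:ℝ)..(2 * Real.pi), ρ (f (Complex.exp (t * Complex.I))))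
      ≤ ∫ t in (0:ℝ)..(2 * Real.pi), h t :=
    intervalIntegral.integral_mono_on (le_of_lt twopi_pos) hint hhint hgh
  -- compute the integral of the majorant
  have hindval : (∫ t in (0:ℝ)..(2 * Real.pi), E.indicator (fun _ => (1:ℝ)) t)
      ≤ ε := by
    rw [intervalIntegral.integral_of_le (le_of_lt twopi_pos),
      MeasureTheory.setIntegral_indicator hEmeas]
    rw [setIntegral_const, smul_eq_mul, mul_one]
    have h1 : volume (Ioc 0 (2 * Real.pi) ∩ E) ≤ volume E :=
      measure_mono (inter_subset_right)
    have h2 : volume (Ioc 0 (2 * Real.pi) ∩ E) ≤ ENNReal.ofReal ε :=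
      le_trans h1 (le_of_lt hEvol)
    exact ENNReal.toReal_le_of_le_ofReal (le_of_lt hεpos) h2
  have hhval : (∫ t in (0:ℝ)..(2 * Real.pi), h t)
      ≤ (M + δ / 2) * (2 * Real.pi) + c * ε := by
    rw [hh]
    rw [intervalIntegral.integral_add intervalIntegrable_const (hind_int.const_mul c),
      intervalIntegral.integral_const, intervalIntegral.integral_const_mul]
    have h3 := mul_le_mul_of_nonneg_left hindval (le_of_lt hcpos)
    simp only [smul_eq_mul, sub_zero, mul_comm (2 * Real.pi) (M + δ / 2)]
    exact add_le_add le_rfl h3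
  -- put it together
  have key : ρ x ≤ (2 * Real.pi)⁻¹ * ((M + δ / 2) * (2 * Real.pi) + c * ε) := by
    rw [← hf0]
    refine le_trans hmean ?_
    apply mul_le_mul_of_nonneg_left (le_trans hintle hhval)
    positivity
  have hcε : c * ε = Real.pi * δ := by
    rw [hε]
    field_simp [hcpos.ne']
  rw [hcε] at key
  have : (2 * Real.pi)⁻¹ * ((M + δ / 2) * (2 * Real.pi) + Real.pi * δ) = M + δ := by
    field_simp
    ring
  rw [this] at key
  exact key
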